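/- Define R(α) := π(1 − cos α)/(2 − cos α). Let 0 < α < π/2 and 0 < r < R(α). Then there exists a unique b ∈ (α/2 − π/4, α/2) with f(α, r, b) = 0. -/

import Mathlib

open Real

/-- The function whose zeros parametrize the boundary contours associated to
isosceles triunduloids. -/
noncomputable def isoF (α r b : ℝ) : ℝ :=
  Real.sin (α - 2 * b) ^ 2 * Real.sin (2 * r) ^ 2 + Real.cos (2 * r) ^ 2 -
    Real.sin (Real.sqrt (π ^ 2 / 4 - 2 * Real.cos α * (r * (π - r)))) ^ 2

/-- The maximal arm truncation length for isosceles triunduloids. -/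
noncomputable def Rmax (α : ℝ) : ℝ := π * (1 - Real.cos α) / (2 - Real.cos α)

set_option maxHeartbeats 1000000 in
theorem stmt_15 (α r : ℝ) (hα : 0 < α ∧ α < π / 2) (hr : 0 < r ∧ r < Rmax α) :
    ∃! b : ℝ, b ∈ Set.Ioo (α / 2 - π / 4) (α / 2) ∧ isoF α r b = 0 := by
  obtain ⟨hα0, hα2⟩ := hα
  obtain ⟨hr0, hrR⟩ := hr
  have hπ : (0:ℝ) < π := Real.pi_pos
  have hc : 0 < Real.cos α := Real.cos_pos_of_mem_Ioo ⟨by linarith, hα2⟩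
  have hc1 : Real.cos α < 1 := by
    have := Real.cos_lt_cos_of_nonneg_of_le_pi (le_refl 0) (by linarith) hα0
    rwa [Real.cos_zero] at this
  -- r < π / 2
  have hrm : r * (2 - Real.cos α) < π * (1 - Real.cos α) := by
    have h2c : (0:ℝ) < 2 - Real.cos α := by linarith
    rw [Rmax, lt_div_iff₀ h2c] at hrR
    linarith
  have hrlt : r < π / 2 := by nlinarith
  have hs : 0 < Real.sin (2 * r) :=
    Real.sin_pos_of_pos_of_lt_pi (by linarith) (by linarith)
  set D : ℝ := π ^ 2 / 4 - 2 * Real.cos α * (r * (π - r)) with hDdef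
  have hD1 : (π / 2 - 2 * r) ^ 2 < D := by
    rw [hDdef]; nlinarith
  have hD0 : 0 ≤ D := le_of_lt (lt_of_le_of_lt (sq_nonneg _) hD1)
  have hD2 : D < π ^ 2 / 4 := by
    rw [hDdef]
    nlinarith [mul_pos hc (mul_pos hr0 (by linarith : (0:ℝ) < π - r))]
  set x : ℝ := Real.sqrt D with hxdef
  have hx2 : x ^ 2 = D := Real.sq_sqrt hD0
  have hx0 : 0 ≤ x := Real.sqrt_nonneg _
  have hxlt : x < π / 2 := by
    rw [hxdef, Real.sqrt_lt' (by linarith : (0:ℝ) < π / 2)]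
    nlinarith
  have habs : |π / 2 - 2 * r| < x := by
    have h1 : π / 2 - 2 * r < x := by
      rw [hxdef]
      exact Real.lt_sqrt_of_sq_lt hD1
    have h2 : -(π / 2 - 2 * r) < x := by
      rw [hxdef]
      refine Real.lt_sqrt_of_sq_lt ?_
      nlinarith
    rw [abs_lt]
    exact ⟨by linarith, h1⟩
  have hxpos : 0 < x := lt_of_le_of_lt (abs_nonneg _) habs
  -- sin x ^ 2 > cos (2r) ^ 2
  have hmem1 : |π / 2 - 2 * r| ∈ Set.Icc (-(π/2)) (π/2) :=
    ⟨by linarith [abs_nonneg (π / 2 - 2 * r)], by linarith⟩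
  have hmem2 : x ∈ Set.Icc (-(π/2)) (π/2) := ⟨by linarith, by linarith⟩
  have h1 : Real.sin |π / 2 - 2 * r| < Real.sin x :=
    Real.strictMonoOn_sin hmem1 hmem2 habs
  have h2 : 0 ≤ Real.sin |π / 2 - 2 * r| :=
    Real.sin_nonneg_of_nonneg_of_le_pi (abs_nonneg _) (by linarith [hmem1.2])
  have h3 : Real.sin |π / 2 - 2 * r| ^ 2 = Real.cos (2 * r) ^ 2 := by
    rcases abs_choice (π / 2 - 2 * r) with h | h <;> rw [h]
    · rw [Real.sin_pi_div_two_sub]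
    · rw [Real.sin_neg, Real.sin_pi_div_two_sub]; ring
  have hkey : Real.cos (2 * r) ^ 2 < Real.sin x ^ 2 := by
    rw [← h3]
    exact pow_lt_pow_left₀ h1 h2 two_ne_zero
  have hsinx1 : Real.sin x < 1 := by
    have : Real.sin x < Real.sin (π / 2) :=
      Real.strictMonoOn_sin hmem2 ⟨by linarith, le_refl _⟩ hxlt
    rwa [Real.sin_pi_div_two] at this
  have hsinx0 : 0 ≤ Real.sin x :=
    Real.sin_nonneg_of_nonneg_of_le_pi hx0 (by linarith)
  have hsinxsq : Real.sin x ^ 2 < 1 := by nlinarith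
  have hs2 : 0 < Real.sin (2 * r) ^ 2 := by positivity
  set t₀ : ℝ := (Real.sin x ^ 2 - Real.cos (2 * r) ^ 2) / Real.sin (2 * r) ^ 2 with ht0def
  have ht0pos : 0 < t₀ := div_pos (by linarith) hs2
  have ht0lt1 : t₀ < 1 := by
    rw [ht0def, div_lt_one hs2]
    have h := Real.sin_sq_add_cos_sq (2 * r)
    linarith
  have hst0 : 0 < Real.sqrt t₀ := Real.sqrt_pos.2 ht0pos
  have hst1 : Real.sqrt t₀ < 1 := by
    have := Real.sqrt_lt_sqrt (le_of_lt ht0pos) ht0lt1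
    rwa [Real.sqrt_one] at this
  set θ : ℝ := Real.arcsin (Real.sqrt t₀) with hθdef
  have hθ0 : 0 < θ := Real.arcsin_pos.2 hst0
  have hθ2 : θ < π / 2 := Real.arcsin_lt_pi_div_two.2 hst1
  have hsinθ : Real.sin θ = Real.sqrt t₀ :=
    Real.sin_arcsin (by linarith) (le_of_lt hst1)
  have hsinθsq : Real.sin θ ^ 2 = t₀ := by
    rw [hsinθ, Real.sq_sqrt (le_of_lt ht0pos)]
  clear_value D x t₀ θ
  refine ⟨(α - θ) / 2, ⟨⟨by linarith, by linarith⟩, ?_⟩, ?_⟩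
  · show isoF α r ((α - θ) / 2) = 0
    rw [isoF]
    have harg : α - 2 * ((α - θ) / 2) = θ := by ring
    rw [harg, hsinθsq, ht0def]
    rw [← hDdef, ← hxdef]
    field_simp
    ring
  · rintro b ⟨⟨hb1, hb2⟩, hfb⟩
    rw [isoF, ← hDdef, ← hxdef] at hfb
    have hsq : Real.sin (α - 2 * b) ^ 2 = Real.sin θ ^ 2 := by
      rw [hsinθsq, ht0def, eq_div_iff (ne_of_gt hs2)]
      linarith
    have hab0 : 0 < α - 2 * b := by linarith
    have hab2 : α - 2 * b < π / 2 := by linarith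
    have hsnn : 0 ≤ Real.sin (α - 2 * b) :=
      Real.sin_nonneg_of_nonneg_of_le_pi (by linarith) (by linarith)
    have hθnn : 0 ≤ Real.sin θ := by rw [hsinθ]; exact le_of_lt hst0
    have hse : Real.sin (α - 2 * b) = Real.sin θ := by
      have h := congrArg Real.sqrt hsq
      rwa [Real.sqrt_sq hsnn, Real.sqrt_sq hθnn] at h
    have : α - 2 * b = θ :=
      Real.injOn_sin ⟨by linarith, by linarith⟩ ⟨by linarith, by linarith⟩ hse
    linarith
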